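/- arXiv:1606.07032 — 2 statements merged into one kernel-verified Lean document; each statement's English description precedes it below -/
import Mathlib

section
/- Let C be a Picard category with unit e and symmetry β. Fix an object x, an inverse x*, and an isomorphism u : e ≅ x ⊗ x*. Then the automorphism σ(x) of e given by e ≅ (x ⊗ x) ⊗ (x* ⊗ x*) → (x ⊗ x) ⊗ (x* ⊗ x*) ≅ e, where the middle map is β_{x,x} ⊗ id_{x*⊗x*} and the outer isomorphisms are built from u and its inverse (and associators), is independent of the choice of x*, of u, and of the representative in the isomorphism class of x. -/
/-!
STATEMENT 6: In a Picard category, the signature σ(x) of an object x — the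
automorphism of the unit e obtained by conjugating β_{x,x} ▷ (x* ⊗ x*) by the
isomorphism e ≅ (x ⊗ x) ⊗ (x* ⊗ x*) built from u : e ≅ x ⊗ x* and
associators/unitors — is independent of the choice of inverse x*, of the
isomorphism u, and of the representative in the isomorphism class of x.
-/

open CategoryTheory MonoidalCategory

universe v u

variable {C : Type u} [Category.{v} C] [MonoidalCategory C] [SymmetricCategory C]

/-- The canonical isomorphism `e ≅ (x ⊗ x) ⊗ (x* ⊗ x*)` built from
`u : e ≅ x ⊗ x*`, unitors and associators. -/
def sigConj (x x' : C) (u : 𝟙_ C ≅ x ⊗ x') : 𝟙_ C ≅ (x ⊗ x) ⊗ (x' ⊗ x') :=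
  u ≪≫ whiskerLeftIso x ((λ_ x').symm ≪≫ whiskerRightIso u x' ≪≫ α_ x x' x')
    ≪≫ (α_ x x (x' ⊗ x')).symm

/-- The signature of `x` computed from the inverse data `(x', u)`:
the automorphism of the unit obtained by conjugating `β_{x,x} ▷ (x' ⊗ x')`. -/
def sig (x x' : C) (u : 𝟙_ C ≅ x ⊗ x') : 𝟙_ C ⟶ 𝟙_ C :=
  (sigConj x x' u).hom ≫ ((β_ x x).hom ▷ (x' ⊗ x')) ≫ (sigConj x x' u).inv

/-- Eckmann–Hilton: endomorphisms of the monoidal unit commute. -/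
lemma unit_endo_comm (f g : 𝟙_ C ⟶ 𝟙_ C) : f ≫ g = g ≫ f := by
  have e1 : f ≫ g
      = (ρ_ (𝟙_ C)).inv ≫ (f ▷ (𝟙_ C) ≫ (𝟙_ C) ◁ g) ≫ (λ_ (𝟙_ C)).hom := by
    simp [id_whiskerLeft, MonoidalCategory.whiskerRight_id, unitors_equal,
      unitors_inv_equal]
  have e2 : g ≫ f
      = (ρ_ (𝟙_ C)).inv ≫ ((𝟙_ C) ◁ g ≫ f ▷ (𝟙_ C)) ≫ (λ_ (𝟙_ C)).hom := by
    simp [id_whiskerLeft, MonoidalCategory.whiskerRight_id, unitors_equal,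
      unitors_inv_equal]
  rw [e1, e2, whisker_exchange]

/-- Conjugating an endomorphism of `z` by any iso `𝟙_ C ≅ z` gives the same
endomorphism of the unit. -/
lemma conj_indep {z : C} (ψ₁ ψ₂ : 𝟙_ C ≅ z) (h : z ⟶ z) :
    ψ₁.hom ≫ h ≫ ψ₁.inv = ψ₂.hom ≫ h ≫ ψ₂.inv := by
  have key : ψ₁.hom ≫ h ≫ ψ₁.inv
      = (ψ₁.hom ≫ ψ₂.inv) ≫ (ψ₂.hom ≫ h ≫ ψ₂.inv) ≫ (ψ₂.hom ≫ ψ₁.inv) := by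
    simp
  rw [key, unit_endo_comm (ψ₁.hom ≫ ψ₂.inv)]
  simp

lemma sig_eq_conj (x x' : C) (u : 𝟙_ C ≅ x ⊗ x')
    (ψ : 𝟙_ C ≅ (x ⊗ x) ⊗ (x' ⊗ x')) :
    sig x x' u = ψ.hom ≫ ((β_ x x).hom ▷ (x' ⊗ x')) ≫ ψ.inv :=
  conj_indep _ _ _

theorem signature_well_defined
    (hgpd : ∀ {a b : C} (f : a ⟶ b), IsIso f)
    (hinv : ∀ x : C, ∃ y : C,
      Nonempty (x ⊗ y ≅ 𝟙_ C) ∧ Nonempty (y ⊗ x ≅ 𝟙_ C))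
    (x y x' y' : C) (u : 𝟙_ C ≅ x ⊗ x') (v : 𝟙_ C ≅ y ⊗ y') (p : x ≅ y) :
    sig x x' u = sig y y' v := by
  -- an isomorphism between the two chosen inverses
  have q : x' ≅ y' :=
    (λ_ x').symm ≪≫ whiskerRightIso (v ≪≫ β_ y y') x' ≪≫ α_ y' y x'
      ≪≫ whiskerLeftIso y' (whiskerRightIso p.symm x' ≪≫ u.symm) ≪≫ ρ_ y'
  -- compute `sig y y' v` using a transported conjugating isomorphism
  rw [sig_eq_conj y y' v
    (sigConj x x' u ≪≫ whiskerRightIso (tensorIso p p) (x' ⊗ x')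
      ≪≫ whiskerLeftIso (y ⊗ y) (tensorIso q q))]
  have nat : (tensorIso p p).hom ≫ (β_ y y).hom
      = (β_ x x).hom ≫ (tensorIso p p).hom := by
    simpa using BraidedCategory.braiding_naturality p.hom p.hom
  rw [sig]
  simp only [Iso.trans_hom, Iso.trans_inv, whiskerRightIso_hom, whiskerRightIso_inv,
    whiskerLeftIso_hom, whiskerLeftIso_inv, Category.assoc]
  congr 1
  rw [whisker_exchange_assoc, ← comp_whiskerRight_assoc, nat,
    comp_whiskerRight_assoc]
  rw [cancel_epi ((β_ x x).hom ▷ (x' ⊗ x'))]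
  rw [whiskerLeft_hom_inv_assoc, hom_inv_whiskerRight_assoc]
end

section
/- Let C be a Picard category with unit e and symmetry β. The signature map k₀ : π₀C → Aut(e), sending the class of x to the signature σ(x) conjugated from β_{x,x} ⊗ id_{x*⊗x*} as above, is a group homomorphism whose image consists of 2-torsion elements: k₀([x])² = id_e for every object x. -/
/-!
STATEMENT 7: For a Picard category C, the signature map k₀ : π₀C → Aut(e) is a
group homomorphism whose image consists of 2-torsion elements. We formalize
this by the defining equations: the signature of x ⊗ y (computed from the
induced inverse data) equals the composite of the signatures of x and of y,
and each signature squares to the identity.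
(Together with well-definedness on isomorphism classes, proved separately,
this says exactly that k₀ : π₀C → Aut(e) is a homomorphism with 2-torsion
image.)
-/

open CategoryTheory MonoidalCategory

universe v u

variable {C : Type u} [Category.{v} C] [MonoidalCategory C] [SymmetricCategory C]

/-- The inverse data for `x ⊗ y` induced by inverse data for `x` and `y`:
the canonical isomorphism `e ≅ (x ⊗ y) ⊗ (y' ⊗ x')`. -/
def prodInvIso (x y x' y' : C) (u : 𝟙_ C ≅ x ⊗ x') (v : 𝟙_ C ≅ y ⊗ y') :
    𝟙_ C ≅ (x ⊗ y) ⊗ (y' ⊗ x') :=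
  u ≪≫ whiskerLeftIso x ((λ_ x').symm ≪≫ whiskerRightIso v x' ≪≫ α_ y y' x')
    ≪≫ (α_ x y (y' ⊗ x')).symm

set_option linter.unusedSectionVars false

def phi (a : C) (s : 𝟙_ C ⟶ 𝟙_ C) : a ⟶ a := (λ_ a).inv ≫ s ▷ a ≫ (λ_ a).hom

lemma phi_natural (s : 𝟙_ C ⟶ 𝟙_ C) {a a' : C} (f : a ⟶ a') :
    phi a s ≫ f = f ≫ phi a' s := by
  simp only [phi, Category.assoc]
  rw [← leftUnitor_naturality, ← whisker_exchange_assoc, leftUnitor_inv_naturality_assoc]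

lemma phi_unit (s : 𝟙_ C ⟶ 𝟙_ C) : phi (𝟙_ C) s = s := by
  simp [phi, unitors_equal, unitors_inv_equal]

lemma phi_comp (a : C) (s t : 𝟙_ C ⟶ 𝟙_ C) : phi a (s ≫ t) = phi a s ≫ phi a t := by
  simp [phi]

lemma phi_tensor_right (a c : C) (s : 𝟙_ C ⟶ 𝟙_ C) :
    phi (a ⊗ c) s = phi a s ▷ c := by
  simp only [phi]
  monoidal

lemma phi_rho (a : C) (s : 𝟙_ C ⟶ 𝟙_ C) :
    phi a s = (ρ_ a).inv ≫ a ◁ s ≫ (ρ_ a).hom := by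
  have h := BraidedCategory.braiding_naturality_right a (Y := 𝟙_ C) (Z := 𝟙_ C) s
  rw [braiding_tensorUnit_right] at h
  simp only [phi, Category.assoc]
  rw [← cancel_epi (ρ_ a).hom, ← reassoc_of% h]
  simp

lemma phi_tensor_left (a c : C) (s : 𝟙_ C ⟶ 𝟙_ C) :
    phi (a ⊗ c) s = a ◁ phi c s := by
  rw [phi_rho, phi_rho]
  monoidal

lemma whiskerRight_cancel' {a a' b z : C} (j : b ⊗ z ≅ 𝟙_ C) {f g : a ⟶ a'}
    (h : f ▷ b = g ▷ b) : f = g := by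
  have h3 : f ▷ (b ⊗ z) = g ▷ (b ⊗ z) := by
    rw [whiskerRight_tensor, whiskerRight_tensor, h]
  have h4 := whisker_exchange f j.hom
  rw [h3, ← whisker_exchange g j.hom] at h4
  have h5 := (cancel_epi (a ◁ j.hom)).1 h4
  simpa using h5

lemma phi_char {a b : C} (w : 𝟙_ C ≅ a ⊗ b) (f : a ⟶ a) :
    phi a (w.hom ≫ f ▷ b ≫ w.inv) = f := by
  set s := w.hom ≫ f ▷ b ≫ w.inv with hs
  have hn := phi_natural s w.hom
  rw [phi_unit] at hn
  have hab : phi (a ⊗ b) s = f ▷ b := by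
    rw [← cancel_epi w.hom, ← hn, hs]; simp
  rw [phi_tensor_right] at hab
  exact whiskerRight_cancel' ((β_ b a) ≪≫ w.symm) hab

lemma phi_inj {a b : C} (w : 𝟙_ C ≅ a ⊗ b) {s t : 𝟙_ C ⟶ 𝟙_ C}
    (h : phi a s = phi a t) : s = t := by
  have hws := phi_natural s w.hom; rw [phi_unit] at hws
  have hwt := phi_natural t w.hom; rw [phi_unit] at hwt
  have hab : phi (a ⊗ b) s = phi (a ⊗ b) t := by
    rw [phi_tensor_right, phi_tensor_right, h]
  calc s = (s ≫ w.hom) ≫ w.inv := by simp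
    _ = (w.hom ≫ phi (a ⊗ b) s) ≫ w.inv := by rw [hws]
    _ = (w.hom ≫ phi (a ⊗ b) t) ≫ w.inv := by rw [hab]
    _ = (t ≫ w.hom) ≫ w.inv := by rw [hwt]
    _ = t := by simp

def midSwap (x y : C) : (x ⊗ y) ⊗ (x ⊗ y) ≅ (x ⊗ x) ⊗ (y ⊗ y) :=
  α_ x y (x ⊗ y) ≪≫
    whiskerLeftIso x ((α_ y x y).symm ≪≫ whiskerRightIso (β_ y x) y ≪≫ α_ x y y)
    ≪≫ (α_ x x (y ⊗ y)).symm

lemma key (x y : C) :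
    (β_ (x ⊗ y) (x ⊗ y)).hom
      = (midSwap x y).hom ≫ ((β_ x x).hom ⊗ₘ (β_ y y).hom) ≫ (midSwap x y).inv := by
  rw [MonoidalCategory.tensorHom_def]
  simp only [midSwap, BraidedCategory.braiding_tensor_left_hom, BraidedCategory.braiding_tensor_right_hom, Iso.trans_hom,
    Iso.trans_inv, Iso.symm_hom, Iso.symm_inv, whiskerLeftIso_hom, whiskerLeftIso_inv,
    whiskerRightIso_hom, whiskerRightIso_inv,
    ← SymmetricCategory.braiding_swap_eq_inv_braiding, Category.assoc]
  monoidal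

lemma sig_spec (x x' : C) (u : 𝟙_ C ≅ x ⊗ x') :
    phi (x ⊗ x) (sig x x' u) = (β_ x x).hom := by
  unfold sig
  exact phi_char (sigConj x x' u) (β_ x x).hom

lemma conj_phi {a b : C} (k : a ≅ b) (s : 𝟙_ C ⟶ 𝟙_ C) :
    phi a s = k.hom ≫ phi b s ≫ k.inv := by
  rw [← Category.assoc, ← phi_natural]; simp

theorem signature_is_two_torsion_homomorphism
    (hgpd : ∀ {a b : C} (f : a ⟶ b), IsIso f)
    (hinv : ∀ x : C, ∃ y : C,
      Nonempty (x ⊗ y ≅ 𝟙_ C) ∧ Nonempty (y ⊗ x ≅ 𝟙_ C))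
    (x y x' y' : C) (u : 𝟙_ C ≅ x ⊗ x') (v : 𝟙_ C ≅ y ⊗ y') :
    sig (x ⊗ y) (y' ⊗ x') (prodInvIso x y x' y' u v) = sig x x' u ≫ sig y y' v ∧
      sig x x' u ≫ sig x x' u = 𝟙 (𝟙_ C) := by
  constructor
  · apply phi_inj (sigConj (x ⊗ y) (y' ⊗ x') (prodInvIso x y x' y' u v))
    rw [sig_spec, phi_comp]
    rw [conj_phi (midSwap x y) (sig x x' u), conj_phi (midSwap x y) (sig y y' v)]
    rw [phi_tensor_right (x ⊗ x) (y ⊗ y) (sig x x' u),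
      phi_tensor_left (x ⊗ x) (y ⊗ y) (sig y y' v), sig_spec x x' u, sig_spec y y' v]
    rw [key]
    simp [MonoidalCategory.tensorHom_def]
  · simp only [sig, Category.assoc, Iso.inv_hom_id_assoc]
    slice_lhs 2 3 => rw [← comp_whiskerRight]
    rw [SymmetricCategory.symmetry]
    simp
end
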